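/- Let G be a finite simple graph, let R and S be disjoint subsets of V(G), and let T = R ∪ S. Let ρ be a fall R-type and σ a fall S-type that are fall-compatible, and let τ be their fall merge type. Then for every independent set C_R ⊆ R of G[R] that is fall-valid in R with fall R-type ρ, and every independent set C_S ⊆ S of G[S] that is fall-valid in S with fall S-type σ, the set C_R ∪ C_S is an independent set of G[T], is fall-valid in T, and its fall T-type is τ. -/
import Mathlib


open scoped Classical

namespace FallCol

/-- The three possible descriptions of a color class on an equivalence class:
`none`, `contains`, or `demand`. -/
inductive Desc where
  | none
  | contains
  | demand
deriving DecidableEq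

variable {V : Type*}

/-- The neighborhood of `v` outside of `U`, i.e. `N_G(v) \ U`. -/
def extN (G : SimpleGraph V) (U : Set V) (v : V) : Set V := G.neighborSet v \ U

/-- The `~_U`-equivalence class of `u`: the vertices of `U` with the same
neighborhood outside of `U` as `u`. -/
def cls (G : SimpleGraph V) (U : Set V) (u : V) : Set V :=
  {v | v ∈ U ∧ extN G U v = extN G U u}

/-- The set of equivalence classes `U/~_U`. -/
def eqClasses (G : SimpleGraph V) (U : Set V) : Set (Set V) :=
  {Q | ∃ u ∈ U, Q = cls G U u}

/-- The equivalence classes of `~_U`, as a type. -/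
abbrev Classes (G : SimpleGraph V) (U : Set V) := {Q // Q ∈ eqClasses G U}

/-- A fall `U`-type: a map `U/~_U → {none, contains, demand}`. -/
abbrev FallType (G : SimpleGraph V) (U : Set V) := Classes G U → Desc

/-- The neighborhood of `v` in the induced subgraph `G[U]`. -/
def indN (G : SimpleGraph V) (U : Set V) (v : V) : Set V := G.neighborSet v ∩ U

/-- `C` is an independent set of the induced subgraph `G[U]`. -/
def IndepIn (G : SimpleGraph V) (U C : Set V) : Prop :=
  C ⊆ U ∧ ∀ u ∈ C, ∀ v ∈ C, ¬ G.Adj u v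

/-- The fall `U`-type of the color class `C`. -/
noncomputable def fallTypeOf (G : SimpleGraph V) (U C : Set V) : FallType G U :=
  fun Q =>
    if (Q.1 ∩ C).Nonempty then Desc.contains
    else if ∃ v ∈ Q.1, indN G U v ∩ C = ∅ then Desc.demand
    else Desc.none

/-- `C` is fall-valid in `U`: there is no class `Q ∈ U/~_U` intersecting `C` such that
some vertex of `Q \ C` has open neighborhood in `G[U]` disjoint from `C`. -/
def FallValid (G : SimpleGraph V) (U C : Set V) : Prop :=
  ¬ ∃ Q ∈ eqClasses G U, (Q ∩ C).Nonempty ∧ ∃ v ∈ Q \ C, indN G U v ∩ C = ∅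

/-- `Q_R Q_S ∈ E(H)`: every vertex of `Q_R` is adjacent to every vertex of `Q_S`. -/
def OpEdge (G : SimpleGraph V) (QR QS : Set V) : Prop :=
  ∀ u ∈ QR, ∀ v ∈ QS, G.Adj u v

/-- A fall `R`-type `ρ` and a fall `S`-type `σ` are fall-compatible. -/
def FallCompatible (G : SimpleGraph V) (R S : Set V)
    (ρ : FallType G R) (σ : FallType G S) : Prop :=
  (¬ ∃ (QR : Classes G R) (QS : Classes G S),
      OpEdge G QR.1 QS.1 ∧ ρ QR = Desc.contains ∧ σ QS = Desc.contains) ∧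
  (∀ Q : Classes G (R ∪ S),
    ((∃ QR : Classes G R, QR.1 ⊆ Q.1 ∧ ρ QR = Desc.contains) ∨
     (∃ QS : Classes G S, QS.1 ⊆ Q.1 ∧ σ QS = Desc.contains)) →
    ((∀ QR : Classes G R, QR.1 ⊆ Q.1 → ρ QR = Desc.demand →
        ∃ QS : Classes G S, σ QS = Desc.contains ∧ OpEdge G QR.1 QS.1) ∧
     (∀ QS : Classes G S, QS.1 ⊆ Q.1 → σ QS = Desc.demand →
        ∃ QR : Classes G R, ρ QR = Desc.contains ∧ OpEdge G QR.1 QS.1)))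

/-- The fall merge type of a fall `R`-type `ρ` and a fall `S`-type `σ`. -/
noncomputable def fallMergeType (G : SimpleGraph V) (R S : Set V)
    (ρ : FallType G R) (σ : FallType G S) : FallType G (R ∪ S) :=
  fun Q =>
    if (∃ QR : Classes G R, QR.1 ⊆ Q.1 ∧ ρ QR = Desc.contains) ∨
       (∃ QS : Classes G S, QS.1 ⊆ Q.1 ∧ σ QS = Desc.contains) then
      Desc.contains
    else if (∃ QR : Classes G R, QR.1 ⊆ Q.1 ∧ ρ QR = Desc.demand ∧
              ∀ QS : Classes G S, OpEdge G QR.1 QS.1 → σ QS ≠ Desc.contains) ∨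
            (∃ QS : Classes G S, QS.1 ⊆ Q.1 ∧ σ QS = Desc.demand ∧
              ∀ QR : Classes G R, OpEdge G QR.1 QS.1 → ρ QR ≠ Desc.contains) then
      Desc.demand
    else Desc.none

section Helpers

lemma mem_cls_self (G : SimpleGraph V) {U : Set V} {u : V} (hu : u ∈ U) :
    u ∈ cls G U u := ⟨hu, rfl⟩

lemma eqClasses_subset (G : SimpleGraph V) {U Q : Set V} (h : Q ∈ eqClasses G U) : Q ⊆ U := by
  obtain ⟨u, -, rfl⟩ := h; exact fun _ hv => hv.1

lemma cls_eq_of_mem (G : SimpleGraph V) {U : Set V} {u t : V} (h : u ∈ cls G U t) :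
    cls G U u = cls G U t := by
  unfold cls; rw [h.2]

lemma cls_eq_class (G : SimpleGraph V) {U : Set V} (Q : Classes G U) {v : V} (hv : v ∈ Q.1) :
    cls G U v = Q.1 := by
  obtain ⟨Q, t, ht, rfl⟩ := Q
  exact cls_eq_of_mem G hv

lemma extN_eq_of_sub (G : SimpleGraph V) {R T : Set V} (h : R ⊆ T) {u v : V}
    (he : extN G R u = extN G R v) : extN G T u = extN G T v := by
  have key : ∀ w : V, extN G T w = extN G R w \ T := by
    intro w
    ext x
    simp only [extN, Set.mem_diff]
    exact ⟨fun ⟨a, b⟩ => ⟨⟨a, fun hr => b (h hr)⟩, b⟩, fun ⟨⟨a, _⟩, b⟩ => ⟨a, b⟩⟩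
  rw [key u, key v, he]

lemma cls_mono (G : SimpleGraph V) {R T : Set V} (h : R ⊆ T) (u : V) :
    cls G R u ⊆ cls G T u :=
  fun _ hv => ⟨h hv.1, extN_eq_of_sub G h hv.2⟩

lemma opEdge_of_adj (G : SimpleGraph V) {R S : Set V} (hRS : Disjoint R S) {u w : V}
    (hu : u ∈ R) (hw : w ∈ S) (h : G.Adj u w) :
    OpEdge G (cls G R u) (cls G S w) := by
  intro u' hu' w' hw'
  have h1 : w ∈ extN G R u := ⟨h, fun hwR => Set.disjoint_left.mp hRS hwR hw⟩
  have h2 : w ∈ extN G R u' := by rw [hu'.2]; exact h1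
  have hadj : G.Adj u' w := h2.1
  have h3 : u' ∈ extN G S w := ⟨hadj.symm, fun huS => Set.disjoint_left.mp hRS hu'.1 huS⟩
  have h4 : u' ∈ extN G S w' := by rw [hw'.2]; exact h3
  exact h4.1.symm

lemma fallTypeOf_eq_contains_iff (G : SimpleGraph V) (U C : Set V) (Q : Classes G U) :
    fallTypeOf G U C Q = Desc.contains ↔ (Q.1 ∩ C).Nonempty := by
  unfold fallTypeOf
  split_ifs with h1 h2
  · exact iff_of_true rfl h1
  · exact iff_of_false (by simp) h1
  · exact iff_of_false (by simp) h1

lemma fallTypeOf_eq_demand_iff (G : SimpleGraph V) (U C : Set V) (Q : Classes G U) :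
    fallTypeOf G U C Q = Desc.demand ↔
      ¬(Q.1 ∩ C).Nonempty ∧ ∃ v ∈ Q.1, indN G U v ∩ C = ∅ := by
  unfold fallTypeOf
  split_ifs with h1 h2
  · exact iff_of_false (by simp) (fun h => h.1 h1)
  · exact iff_of_true rfl ⟨h1, h2⟩
  · exact iff_of_false (by simp) (fun h => h2 h.2)

lemma fallTypeOf_eq_none_iff (G : SimpleGraph V) (U C : Set V) (Q : Classes G U) :
    fallTypeOf G U C Q = Desc.none ↔
      ¬(Q.1 ∩ C).Nonempty ∧ ¬∃ v ∈ Q.1, indN G U v ∩ C = ∅ := by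
  unfold fallTypeOf
  split_ifs with h1 h2
  · exact iff_of_false (by simp) (fun h => h.1 h1)
  · exact iff_of_false (by simp) (fun h => h.2 h2)
  · exact iff_of_true rfl ⟨h1, h2⟩

lemma fallMergeType_eq_contains_iff (G : SimpleGraph V) (R S : Set V)
    (ρ : FallType G R) (σ : FallType G S) (Q : Classes G (R ∪ S)) :
    fallMergeType G R S ρ σ Q = Desc.contains ↔
      ((∃ QR : Classes G R, QR.1 ⊆ Q.1 ∧ ρ QR = Desc.contains) ∨
       (∃ QS : Classes G S, QS.1 ⊆ Q.1 ∧ σ QS = Desc.contains)) := by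
  unfold fallMergeType
  split_ifs with h1 h2
  · exact iff_of_true rfl h1
  · exact iff_of_false (by simp) h1
  · exact iff_of_false (by simp) h1

lemma fallMergeType_eq_demand_iff (G : SimpleGraph V) (R S : Set V)
    (ρ : FallType G R) (σ : FallType G S) (Q : Classes G (R ∪ S)) :
    fallMergeType G R S ρ σ Q = Desc.demand ↔
      (¬((∃ QR : Classes G R, QR.1 ⊆ Q.1 ∧ ρ QR = Desc.contains) ∨
       (∃ QS : Classes G S, QS.1 ⊆ Q.1 ∧ σ QS = Desc.contains))) ∧
      ((∃ QR : Classes G R, QR.1 ⊆ Q.1 ∧ ρ QR = Desc.demand ∧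
              ∀ QS : Classes G S, OpEdge G QR.1 QS.1 → σ QS ≠ Desc.contains) ∨
            (∃ QS : Classes G S, QS.1 ⊆ Q.1 ∧ σ QS = Desc.demand ∧
              ∀ QR : Classes G R, OpEdge G QR.1 QS.1 → ρ QR ≠ Desc.contains)) := by
  unfold fallMergeType
  split_ifs with h1 h2
  · exact iff_of_false (by simp) (fun h => h.1 h1)
  · exact iff_of_true rfl ⟨h1, h2⟩
  · exact iff_of_false (by simp) (fun h => h2 h.2)

lemma fallMergeType_eq_none_iff (G : SimpleGraph V) (R S : Set V)
    (ρ : FallType G R) (σ : FallType G S) (Q : Classes G (R ∪ S)) :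
    fallMergeType G R S ρ σ Q = Desc.none ↔
      (¬((∃ QR : Classes G R, QR.1 ⊆ Q.1 ∧ ρ QR = Desc.contains) ∨
       (∃ QS : Classes G S, QS.1 ⊆ Q.1 ∧ σ QS = Desc.contains))) ∧
      (¬((∃ QR : Classes G R, QR.1 ⊆ Q.1 ∧ ρ QR = Desc.demand ∧
              ∀ QS : Classes G S, OpEdge G QR.1 QS.1 → σ QS ≠ Desc.contains) ∨
            (∃ QS : Classes G S, QS.1 ⊆ Q.1 ∧ σ QS = Desc.demand ∧
              ∀ QR : Classes G R, OpEdge G QR.1 QS.1 → ρ QR ≠ Desc.contains))) := by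
  unfold fallMergeType
  split_ifs with h1 h2
  · exact iff_of_false (by simp) (fun h => h.1 h1)
  · exact iff_of_false (by simp) (fun h => h.2 h2)
  · exact iff_of_true rfl ⟨h1, h2⟩

end Helpers

/-- Merging fall types. Let `R, S` be disjoint vertex subsets of a finite graph `G` and
`T = R ∪ S`. If `ρ` is a fall `R`-type and `σ` a fall `S`-type which are
fall-compatible, then for every fall-valid independent set `C_R ⊆ R` of `G[R]` of fall
`R`-type `ρ` and every fall-valid independent set `C_S ⊆ S` of `G[S]` of fall `S`-type
`σ`, the union `C_R ∪ C_S` is an independent set of `G[T]`, is fall-valid in `T`, and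
its fall `T`-type is the fall merge type of `ρ` and `σ`. -/
theorem merge_fall_types {V : Type*} [Fintype V] [DecidableEq V] (G : SimpleGraph V)
    (R S : Set V) (hRS : Disjoint R S)
    (ρ : FallType G R) (σ : FallType G S) (hcomp : FallCompatible G R S ρ σ)
    (CR CS : Set V)
    (hCRind : IndepIn G R CR) (hCRvalid : FallValid G R CR)
    (hCRtype : fallTypeOf G R CR = ρ)
    (hCSind : IndepIn G S CS) (hCSvalid : FallValid G S CS)
    (hCStype : fallTypeOf G S CS = σ) :
    IndepIn G (R ∪ S) (CR ∪ CS) ∧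
    FallValid G (R ∪ S) (CR ∪ CS) ∧
    fallTypeOf G (R ∪ S) (CR ∪ CS) = fallMergeType G R S ρ σ := by
  subst hCRtype hCStype
  obtain ⟨hCRsub, hCRadj⟩ := hCRind
  obtain ⟨hCSsub, hCSadj⟩ := hCSind
  -- no edges between CR and CS
  have hcross : ∀ u ∈ CR, ∀ w ∈ CS, ¬ G.Adj u w := by
    intro u hu w hw hadj
    refine hcomp.1 ⟨⟨cls G R u, u, hCRsub hu, rfl⟩, ⟨cls G S w, w, hCSsub hw, rfl⟩,
      opEdge_of_adj G hRS (hCRsub hu) (hCSsub hw) hadj, ?_, ?_⟩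
    · exact (fallTypeOf_eq_contains_iff G R CR _).mpr ⟨u, mem_cls_self G (hCRsub hu), hu⟩
    · exact (fallTypeOf_eq_contains_iff G S CS _).mpr ⟨w, mem_cls_self G (hCSsub hw), hw⟩
  have hind : IndepIn G (R ∪ S) (CR ∪ CS) := by
    refine ⟨Set.union_subset_union hCRsub hCSsub, ?_⟩
    rintro u (hu | hu) v (hv | hv)
    · exact hCRadj u hu v hv
    · exact hcross u hu v hv
    · intro h; exact hcross v hv u hu h.symm
    · exact hCSadj u hu v hv
  -- subclass lemmas
  have hsubR : ∀ (Q : Classes G (R ∪ S)) (u : V), u ∈ Q.1 → u ∈ R → cls G R u ⊆ Q.1 := by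
    intro Q u hu huR
    rw [← cls_eq_class G Q hu]
    exact cls_mono G Set.subset_union_left u
  have hsubS : ∀ (Q : Classes G (R ∪ S)) (u : V), u ∈ Q.1 → u ∈ S → cls G S u ⊆ Q.1 := by
    intro Q u hu huS
    rw [← cls_eq_class G Q hu]
    exact cls_mono G Set.subset_union_right u
  -- characterization of "contains" condition
  have hA : ∀ Q : Classes G (R ∪ S), (Q.1 ∩ (CR ∪ CS)).Nonempty ↔
      ((∃ QR : Classes G R, QR.1 ⊆ Q.1 ∧ fallTypeOf G R CR QR = Desc.contains) ∨
       (∃ QS : Classes G S, QS.1 ⊆ Q.1 ∧ fallTypeOf G S CS QS = Desc.contains)) := by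
    intro Q
    constructor
    · rintro ⟨u, huQ, (huC | huC)⟩
      · exact Or.inl ⟨⟨cls G R u, u, hCRsub huC, rfl⟩, hsubR Q u huQ (hCRsub huC),
          (fallTypeOf_eq_contains_iff G R CR _).mpr ⟨u, mem_cls_self G (hCRsub huC), huC⟩⟩
      · exact Or.inr ⟨⟨cls G S u, u, hCSsub huC, rfl⟩, hsubS Q u huQ (hCSsub huC),
          (fallTypeOf_eq_contains_iff G S CS _).mpr ⟨u, mem_cls_self G (hCSsub huC), huC⟩⟩
    · rintro (⟨QR, hsub, hc⟩ | ⟨QS, hsub, hc⟩)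
      · obtain ⟨u, huQ, huC⟩ := (fallTypeOf_eq_contains_iff G R CR _).mp hc
        exact ⟨u, hsub huQ, Or.inl huC⟩
      · obtain ⟨u, huQ, huC⟩ := (fallTypeOf_eq_contains_iff G S CS _).mp hc
        exact ⟨u, hsub huQ, Or.inr huC⟩
  -- characterization of "demand" condition
  have hB : ∀ Q : Classes G (R ∪ S), ¬(Q.1 ∩ (CR ∪ CS)).Nonempty →
      ((∃ v ∈ Q.1, indN G (R ∪ S) v ∩ (CR ∪ CS) = ∅) ↔
       ((∃ QR : Classes G R, QR.1 ⊆ Q.1 ∧ fallTypeOf G R CR QR = Desc.demand ∧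
           ∀ QS : Classes G S, OpEdge G QR.1 QS.1 → fallTypeOf G S CS QS ≠ Desc.contains) ∨
        (∃ QS : Classes G S, QS.1 ⊆ Q.1 ∧ fallTypeOf G S CS QS = Desc.demand ∧
           ∀ QR : Classes G R, OpEdge G QR.1 QS.1 → fallTypeOf G R CR QR ≠ Desc.contains))) := by
    intro Q hnA
    constructor
    · rintro ⟨v, hvQ, hv⟩
      rcases eqClasses_subset G Q.2 hvQ with hvR | hvS
      · refine Or.inl ⟨⟨cls G R v, v, hvR, rfl⟩, hsubR Q v hvQ hvR, ?_, ?_⟩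
        · refine (fallTypeOf_eq_demand_iff G R CR _).mpr
            ⟨fun ⟨x, hx1, hx2⟩ => hnA ⟨x, hsubR Q v hvQ hvR hx1, Or.inl hx2⟩,
             v, mem_cls_self G hvR, ?_⟩
          apply Set.eq_empty_iff_forall_notMem.mpr
          rintro x ⟨⟨ha, hxR⟩, hxC⟩
          have : x ∈ indN G (R ∪ S) v ∩ (CR ∪ CS) := ⟨⟨ha, Or.inl hxR⟩, Or.inl hxC⟩
          rw [hv] at this; exact this
        · intro QS hop hc
          obtain ⟨w, hwQS, hwCS⟩ := (fallTypeOf_eq_contains_iff G S CS _).mp hc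
          have hadj : G.Adj v w := hop v (mem_cls_self G hvR) w hwQS
          have : w ∈ indN G (R ∪ S) v ∩ (CR ∪ CS) :=
            ⟨⟨hadj, Or.inr (eqClasses_subset G QS.2 hwQS)⟩, Or.inr hwCS⟩
          rw [hv] at this; exact this
      · refine Or.inr ⟨⟨cls G S v, v, hvS, rfl⟩, hsubS Q v hvQ hvS, ?_, ?_⟩
        · refine (fallTypeOf_eq_demand_iff G S CS _).mpr
            ⟨fun ⟨x, hx1, hx2⟩ => hnA ⟨x, hsubS Q v hvQ hvS hx1, Or.inr hx2⟩,
             v, mem_cls_self G hvS, ?_⟩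
          apply Set.eq_empty_iff_forall_notMem.mpr
          rintro x ⟨⟨ha, hxS⟩, hxC⟩
          have : x ∈ indN G (R ∪ S) v ∩ (CR ∪ CS) := ⟨⟨ha, Or.inr hxS⟩, Or.inr hxC⟩
          rw [hv] at this; exact this
        · intro QR hop hc
          obtain ⟨w, hwQR, hwCR⟩ := (fallTypeOf_eq_contains_iff G R CR _).mp hc
          have hadj : G.Adj w v := hop w hwQR v (mem_cls_self G hvS)
          have : w ∈ indN G (R ∪ S) v ∩ (CR ∪ CS) :=
            ⟨⟨hadj.symm, Or.inl (eqClasses_subset G QR.2 hwQR)⟩, Or.inl hwCR⟩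
          rw [hv] at this; exact this
    · rintro (⟨QR, hsub, hdem, hall⟩ | ⟨QS, hsub, hdem, hall⟩)
      · obtain ⟨-, v, hvQR, hvind⟩ := (fallTypeOf_eq_demand_iff G R CR _).mp hdem
        have hvR : v ∈ R := eqClasses_subset G QR.2 hvQR
        refine ⟨v, hsub hvQR, Set.eq_empty_iff_forall_notMem.mpr ?_⟩
        rintro x ⟨⟨ha, -⟩, (hxC | hxC)⟩
        · have : x ∈ indN G R v ∩ CR := ⟨⟨ha, hCRsub hxC⟩, hxC⟩
          rw [hvind] at this; exact this
        · have hxS : x ∈ S := hCSsub hxC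
          have hop : OpEdge G QR.1 (cls G S x) := by
            rw [← cls_eq_class G QR hvQR]
            exact opEdge_of_adj G hRS hvR hxS ha
          exact hall ⟨cls G S x, x, hxS, rfl⟩ hop
            ((fallTypeOf_eq_contains_iff G S CS _).mpr ⟨x, mem_cls_self G hxS, hxC⟩)
      · obtain ⟨-, v, hvQS, hvind⟩ := (fallTypeOf_eq_demand_iff G S CS _).mp hdem
        have hvS : v ∈ S := eqClasses_subset G QS.2 hvQS
        refine ⟨v, hsub hvQS, Set.eq_empty_iff_forall_notMem.mpr ?_⟩
        rintro x ⟨⟨ha, -⟩, (hxC | hxC)⟩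
        · have hxR : x ∈ R := hCRsub hxC
          have hop : OpEdge G (cls G R x) QS.1 := by
            rw [← cls_eq_class G QS hvQS]
            exact opEdge_of_adj G hRS hxR hvS ha.symm
          exact hall ⟨cls G R x, x, hxR, rfl⟩ hop
            ((fallTypeOf_eq_contains_iff G R CR _).mpr ⟨x, mem_cls_self G hxR, hxC⟩)
        · have : x ∈ indN G S v ∩ CS := ⟨⟨ha, hCSsub hxC⟩, hxC⟩
          rw [hvind] at this; exact this
  -- fall validity
  have hvalid : FallValid G (R ∪ S) (CR ∪ CS) := by
    rintro ⟨Q, hQ, hne, v, ⟨hvQ, hvC⟩, hvind⟩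
    set Qc : Classes G (R ∪ S) := ⟨Q, hQ⟩ with hQc
    have hcontain := (hA Qc).mp hne
    rcases eqClasses_subset G hQ hvQ with hvR | hvS
    · have hindR : indN G R v ∩ CR = ∅ := by
        apply Set.eq_empty_iff_forall_notMem.mpr
        rintro x ⟨⟨ha, hxR⟩, hxC⟩
        have : x ∈ indN G (R ∪ S) v ∩ (CR ∪ CS) := ⟨⟨ha, Or.inl hxR⟩, Or.inl hxC⟩
        rw [hvind] at this; exact this
      by_cases hcR : (cls G R v ∩ CR).Nonempty
      · exact hCRvalid ⟨cls G R v, ⟨v, hvR, rfl⟩, hcR,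
          v, ⟨mem_cls_self G hvR, fun h => hvC (Or.inl h)⟩, hindR⟩
      · have hdem : fallTypeOf G R CR ⟨cls G R v, v, hvR, rfl⟩ = Desc.demand :=
          (fallTypeOf_eq_demand_iff G R CR _).mpr ⟨hcR, v, mem_cls_self G hvR, hindR⟩
        obtain ⟨QS, hQSc, hop⟩ :=
          (hcomp.2 Qc hcontain).1 ⟨cls G R v, v, hvR, rfl⟩ (hsubR Qc v hvQ hvR) hdem
        obtain ⟨w, hwQS, hwCS⟩ := (fallTypeOf_eq_contains_iff G S CS _).mp hQSc
        have hadj : G.Adj v w := hop v (mem_cls_self G hvR) w hwQS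
        have : w ∈ indN G (R ∪ S) v ∩ (CR ∪ CS) :=
          ⟨⟨hadj, Or.inr (eqClasses_subset G QS.2 hwQS)⟩, Or.inr hwCS⟩
        rw [hvind] at this; exact this
    · have hindS : indN G S v ∩ CS = ∅ := by
        apply Set.eq_empty_iff_forall_notMem.mpr
        rintro x ⟨⟨ha, hxS⟩, hxC⟩
        have : x ∈ indN G (R ∪ S) v ∩ (CR ∪ CS) := ⟨⟨ha, Or.inr hxS⟩, Or.inr hxC⟩
        rw [hvind] at this; exact this
      by_cases hcS : (cls G S v ∩ CS).Nonempty
      · exact hCSvalid ⟨cls G S v, ⟨v, hvS, rfl⟩, hcS,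
          v, ⟨mem_cls_self G hvS, fun h => hvC (Or.inr h)⟩, hindS⟩
      · have hdem : fallTypeOf G S CS ⟨cls G S v, v, hvS, rfl⟩ = Desc.demand :=
          (fallTypeOf_eq_demand_iff G S CS _).mpr ⟨hcS, v, mem_cls_self G hvS, hindS⟩
        obtain ⟨QR, hQRc, hop⟩ :=
          (hcomp.2 Qc hcontain).2 ⟨cls G S v, v, hvS, rfl⟩ (hsubS Qc v hvQ hvS) hdem
        obtain ⟨w, hwQR, hwCR⟩ := (fallTypeOf_eq_contains_iff G R CR _).mp hQRc
        have hadj : G.Adj w v := hop w hwQR v (mem_cls_self G hvS)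
        have : w ∈ indN G (R ∪ S) v ∩ (CR ∪ CS) :=
          ⟨⟨hadj.symm, Or.inl (eqClasses_subset G QR.2 hwQR)⟩, Or.inl hwCR⟩
        rw [hvind] at this; exact this
  refine ⟨hind, hvalid, funext fun Q => ?_⟩
  cases hval : fallTypeOf G (R ∪ S) (CR ∪ CS) Q with
  | contains =>
    exact ((fallMergeType_eq_contains_iff G R S _ _ Q).mpr
      ((hA Q).mp ((fallTypeOf_eq_contains_iff G (R ∪ S) (CR ∪ CS) Q).mp hval))).symm
  | demand =>
    obtain ⟨hnA, hD⟩ := (fallTypeOf_eq_demand_iff G (R ∪ S) (CR ∪ CS) Q).mp hval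
    exact ((fallMergeType_eq_demand_iff G R S _ _ Q).mpr
      ⟨fun h => hnA ((hA Q).mpr h), (hB Q hnA).mp hD⟩).symm
  | none =>
    obtain ⟨hnA, hnD⟩ := (fallTypeOf_eq_none_iff G (R ∪ S) (CR ∪ CS) Q).mp hval
    exact ((fallMergeType_eq_none_iff G R S _ _ Q).mpr
      ⟨fun h => hnA ((hA Q).mpr h), fun h => hnD ((hB Q hnA).mpr h)⟩).symm

end FallCol
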